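/- arXiv:2412.18888 — 2 statements merged into one kernel-verified Lean document; each statement's English description precedes it below -/
import Mathlib

section
/- Let n ≥ 1, let ℝⁿ_∞ be ℝⁿ with the sup-norm metric, and let ℤⁿ_∞ be the integer lattice with the induced metric. Then d_H(ℝⁿ_∞, ℤⁿ_∞) = d_GH(ℝⁿ_∞, ℤⁿ_∞) = 1/2. -/
open scoped ENNReal

noncomputable section

/-- Ultrametric pseudodistance: infimum over chains from `x` to `y` of the
maximal edge length of the chain. -/
noncomputable def ultraDist {X : Type*} [MetricSpace X] (x y : X) : ℝ≥0∞ :=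
  ⨅ (n : ℕ) (f : Fin (n + 1) → X) (_ : f 0 = x) (_ : f (Fin.last n) = y),
    ⨆ i : Fin n, edist (f i.castSucc) (f i.succ)

/-- Ultrametric pseudodiameter. -/
noncomputable def ultraDiam (X : Type*) [MetricSpace X] : ℝ≥0∞ :=
  ⨆ (x : X) (y : X), ultraDist x y

/-- A correspondence between `X` and `Y`: a relation whose projections are surjective. -/
def IsCorrespondence {X Y : Type*} (R : Set (X × Y)) : Prop :=
  (∀ x : X, ∃ y : Y, (x, y) ∈ R) ∧ (∀ y : Y, ∃ x : X, (x, y) ∈ R)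

/-- Distortion of a relation. -/
noncomputable def distortion {X Y : Type*} [MetricSpace X] [MetricSpace Y]
    (R : Set (X × Y)) : ℝ≥0∞ :=
  ⨆ (p ∈ R) (q ∈ R), ENNReal.ofReal |dist p.1 q.1 - dist p.2 q.2|

/-- Gromov–Hausdorff distance: half the infimal distortion of correspondences. -/
noncomputable def ghDist (X Y : Type*) [MetricSpace X] [MetricSpace Y] : ℝ≥0∞ :=
  (⨅ (R : Set (X × Y)) (_ : IsCorrespondence R), distortion R) / 2


/-- The integer lattice inside `ℝⁿ` with the sup-norm metric (the product
metric on `Fin n → ℝ` is the sup-metric). -/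
def latticeSet (n : ℕ) : Set (Fin n → ℝ) :=
  Set.range (fun (z : Fin n → ℤ) (i : Fin n) => (z i : ℝ))

lemma half_le_abs (z : ℤ) : (1/2:ℝ) ≤ |1/2 - (z:ℝ)| := by
  rcases le_or_gt (z:ℝ) 0 with h | h
  · rw [abs_of_nonneg (by linarith)]; linarith
  · have hz : 0 < z := by exact_mod_cast h
    have : (1:ℝ) ≤ z := by exact_mod_cast hz
    rw [abs_of_nonpos (by linarith)]; linarith

lemma ofReal_half : ENNReal.ofReal (1/2) = 1/2 := by
  rw [ENNReal.ofReal_div_of_pos (by norm_num)]; norm_num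

lemma round_dist {n : ℕ} (x : Fin n → ℝ) :
    dist x (fun i => ((round (x i) : ℤ) : ℝ)) ≤ 1/2 :=
  (dist_pi_le_iff (by norm_num)).2 fun i => by
    rw [Real.dist_eq]; exact abs_sub_round _

lemma haus_part (n : ℕ) (hn : 1 ≤ n) :
    EMetric.hausdorffEdist (latticeSet n) (Set.univ : Set (Fin n → ℝ)) = 1 / 2 := by
  apply le_antisymm
  · apply EMetric.hausdorffEdist_le_of_infEdist
    · intro y _
      calc EMetric.infEdist y Set.univ ≤ edist y y := EMetric.infEdist_le_edist_of_mem (Set.mem_univ y)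
      _ = 0 := by simp
      _ ≤ 1/2 := zero_le
    · intro x _
      calc EMetric.infEdist x (latticeSet n)
          ≤ edist x (fun i => ((round (x i) : ℤ) : ℝ)) :=
            EMetric.infEdist_le_edist_of_mem ⟨fun i => round (x i), rfl⟩
        _ ≤ ENNReal.ofReal (1/2) := by
            rw [edist_dist]; exact ENNReal.ofReal_le_ofReal (round_dist x)
        _ = 1/2 := ofReal_half
  · rw [show EMetric.hausdorffEdist (latticeSet n) Set.univ = EMetric.hausdorffEdist Set.univ (latticeSet n) from EMetric.hausdorffEdist_comm]
    refine le_trans ?_ (EMetric.infEdist_le_hausdorffEdist_of_mem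
      (Set.mem_univ (fun _ : Fin n => (1/2:ℝ))))
    rw [EMetric.le_infEdist]
    rintro y ⟨z, rfl⟩
    calc (1/2 : ℝ≥0∞) = ENNReal.ofReal (1/2) := ofReal_half.symm
      _ ≤ edist ((1/2:ℝ)) ((z ⟨0, hn⟩ : ℤ) : ℝ) := by
          rw [edist_dist, Real.dist_eq]
          exact ENNReal.ofReal_le_ofReal (half_le_abs _)
      _ ≤ edist (fun _ : Fin n => (1/2:ℝ)) (fun i => ((z i : ℤ) : ℝ)) :=
          edist_le_pi_edist (fun _ : Fin n => (1/2:ℝ)) (fun i => ((z i : ℤ) : ℝ)) ⟨0, hn⟩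

lemma lattice_eq_of_dist_lt_one {n : ℕ} {y y' : Fin n → ℝ}
    (hy : y ∈ latticeSet n) (hy' : y' ∈ latticeSet n) (h : dist y y' < 1) : y = y' := by
  obtain ⟨z, rfl⟩ := hy; obtain ⟨z', rfl⟩ := hy'
  have h2 := (dist_pi_lt_iff one_pos).1 h
  funext i
  have hi := h2 i
  rw [Real.dist_eq] at hi
  have hcast : |(z i : ℝ) - z' i| = ((|z i - z' i| : ℤ) : ℝ) := by push_cast; ring_nf
  rw [hcast] at hi
  have : |z i - z' i| < 1 := by exact_mod_cast hi
  have : z i - z' i = 0 := Int.abs_lt_one_iff.1 this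
  have : z i = z' i := by omega
  simp [this]

lemma le_distortion {X Y : Type*} [MetricSpace X] [MetricSpace Y] {R : Set (X × Y)}
    {p q : X × Y} (hp : p ∈ R) (hq : q ∈ R) :
    ENNReal.ofReal |dist p.1 q.1 - dist p.2 q.2| ≤ distortion R := by
  unfold distortion
  exact le_iSup₂_of_le p hp (le_iSup₂_of_le q hq le_rfl)

/-- Upper bound: distortion of the rounding correspondence is ≤ 1. -/

lemma gh_upper (n : ℕ) :
    ∃ R : Set ((Fin n → ℝ) × ↥(latticeSet n)), IsCorrespondence R ∧ distortion R ≤ 1 := by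
  refine ⟨{p | dist p.1 (p.2 : Fin n → ℝ) ≤ 1/2}, ⟨?_, ?_⟩, ?_⟩
  · intro x
    exact ⟨⟨fun i => ((round (x i) : ℤ) : ℝ), fun i => round (x i), rfl⟩, round_dist x⟩
  · intro y
    exact ⟨(y : Fin n → ℝ), by simp [Set.mem_setOf_eq]⟩
  · refine iSup₂_le fun p hp => iSup₂_le fun q hq => ?_
    simp only [Set.mem_setOf_eq] at hp hq
    have h1 : dist p.1 q.1 ≤ dist p.1 p.2.1 + dist (p.2 : Fin n → ℝ) q.2 + dist (q.2 : Fin n → ℝ) q.1 :=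
      dist_triangle4 _ _ _ _
    have h2 : dist (p.2 : Fin n → ℝ) q.2 ≤ dist (p.2 : Fin n → ℝ) p.1 + dist p.1 q.1 + dist q.1 q.2 :=
      dist_triangle4 _ _ _ _
    have habs : |dist p.1 q.1 - dist p.2 q.2| ≤ 1 := by
      rw [Subtype.dist_eq, abs_le]
      have e1 := dist_comm (p.2 : Fin n → ℝ) p.1
      have e2 := dist_comm (q.2 : Fin n → ℝ) q.1
      exact ⟨by linarith, by linarith⟩
    calc ENNReal.ofReal |dist p.1 q.1 - dist p.2 q.2| ≤ ENNReal.ofReal 1 :=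
        ENNReal.ofReal_le_ofReal habs
      _ = 1 := ENNReal.ofReal_one

lemma chain_step_lt {X Y : Type*} [MetricSpace X] [MetricSpace Y] {R : Set (X × Y)}
    {xc : ℕ → X} {g : ℕ → Y} {c : ℝ} {k : ℕ}
    (hstep : dist (xc k) (xc (k+1)) ≤ c)
    (h1 : (xc k, g k) ∈ R) (h2 : (xc (k+1), g (k+1)) ∈ R)
    (hlt : distortion R + ENNReal.ofReal c < 1) :
    dist (g k) (g (k+1)) < 1 := by
  have hreal : dist (g k) (g (k+1)) ≤
      dist (xc k) (xc (k+1)) + |dist (xc k) (xc (k+1)) - dist (g k) (g (k+1))| := by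
    have := le_abs_self (dist (g k) (g (k+1)) - dist (xc k) (xc (k+1)))
    rw [abs_sub_comm] at this
    linarith
  have hE : ENNReal.ofReal (dist (g k) (g (k+1))) < 1 := by
    calc ENNReal.ofReal (dist (g k) (g (k+1)))
        ≤ ENNReal.ofReal (dist (xc k) (xc (k+1)) +
            |dist (xc k) (xc (k+1)) - dist (g k) (g (k+1))|) :=
          ENNReal.ofReal_le_ofReal hreal
      _ = ENNReal.ofReal (dist (xc k) (xc (k+1))) +
            ENNReal.ofReal |dist (xc k) (xc (k+1)) - dist (g k) (g (k+1))| :=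
          ENNReal.ofReal_add dist_nonneg (abs_nonneg _)
      _ ≤ ENNReal.ofReal c + distortion R :=
          add_le_add (ENNReal.ofReal_le_ofReal hstep) (le_distortion h1 h2)
      _ < 1 := by rwa [add_comm]
  exact ENNReal.ofReal_lt_one.mp hE

lemma gh_lower (n : ℕ) (hn : 1 ≤ n) (R : Set ((Fin n → ℝ) × ↥(latticeSet n)))
    (hR : IsCorrespondence R) : (1:ℝ≥0∞) ≤ distortion R := by
  obtain ⟨hR1, hR2⟩ := hR
  have hy0mem : (fun _ : Fin n => (0:ℝ)) ∈ latticeSet n := ⟨fun _ => 0, by funext i; simp⟩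
  have hy1mem : (fun i : Fin n => if i = (⟨0, hn⟩ : Fin n) then (1:ℝ) else 0) ∈ latticeSet n :=
    ⟨fun i => if i = (⟨0, hn⟩ : Fin n) then 1 else 0,
      by funext i; by_cases h : i = (⟨0, hn⟩ : Fin n) <;> simp [h]⟩
  obtain ⟨y0, hy0⟩ : ∃ y0 : ↥(latticeSet n), (y0 : Fin n → ℝ) = fun _ => 0 := ⟨⟨_, hy0mem⟩, rfl⟩
  obtain ⟨y1, hy1⟩ : ∃ y1 : ↥(latticeSet n),
      (y1 : Fin n → ℝ) = fun i => if i = (⟨0, hn⟩ : Fin n) then (1:ℝ) else 0 := ⟨⟨_, hy1mem⟩, rfl⟩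
  have hy01 : y0 ≠ y1 := by
    intro h
    have h2 : (y0 : Fin n → ℝ) ⟨0, hn⟩ = (y1 : Fin n → ℝ) ⟨0, hn⟩ := by rw [h]
    rw [hy0, hy1] at h2
    simp at h2
  obtain ⟨x0, hx0⟩ := hR2 y0
  obtain ⟨x1, hx1⟩ := hR2 y1
  have key : ∀ m : ℕ, 0 < m →
      (1:ℝ≥0∞) ≤ distortion R + ENNReal.ofReal (dist x0 x1 / m) := by
    intro m hm
    by_contra hlt
    push_neg at hlt
    have hm' : (m:ℝ) ≠ 0 := Nat.cast_ne_zero.2 hm.ne'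
    obtain ⟨xc, hxc0, hxcm, hstep⟩ : ∃ xc : ℕ → (Fin n → ℝ), xc 0 = x0 ∧ xc m = x1 ∧
        ∀ k : ℕ, dist (xc k) (xc (k+1)) ≤ dist x0 x1 / m := by
      refine ⟨fun k => x0 + ((k:ℝ)/m) • (x1 - x0), by simp, ?_, ?_⟩
      · have h1 : ((m:ℝ))/m = 1 := div_self hm'
        simp [h1]
      · intro k
        have hsub : (x0 + ((k:ℝ)/m) • (x1 - x0)) - (x0 + (((k:ℝ)+1)/m) • (x1 - x0)) =
            (((k:ℝ))/m - ((k:ℝ)+1)/m) • (x1 - x0) := by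
          rw [add_sub_add_left_eq_sub, ← sub_smul]
        have hcoef : |((k:ℝ))/m - ((k:ℝ)+1)/m| = 1/m := by
          have h1 : ((k:ℝ))/m - ((k:ℝ)+1)/m = -(1/m) := by field_simp; ring
          rw [h1, abs_neg, abs_of_nonneg (by positivity)]
        have hnorm : ‖x1 - x0‖ = dist x0 x1 := by rw [← dist_eq_norm, dist_comm]
        have hc : ((k+1 : ℕ) : ℝ) = (k:ℝ) + 1 := by push_cast; ring
        simp only [hc]
        rw [dist_eq_norm, hsub, norm_smul, hnorm, Real.norm_eq_abs, hcoef]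
        exact le_of_eq (by ring)
    obtain ⟨g, hg0, hgm, hgmem⟩ : ∃ g : ℕ → ↥(latticeSet n), g 0 = y0 ∧ g m = y1 ∧
        ∀ k, k ≤ m → (xc k, g k) ∈ R := by
      refine ⟨fun k => if k = 0 then y0 else if m ≤ k then y1 else (hR1 (xc k)).choose,
        by simp, by simp [hm.ne'], ?_⟩
      intro k hk
      by_cases h0 : k = 0
      · subst h0
        simpa [hxc0] using hx0
      · by_cases hm2 : m ≤ k
        · have hkm : k = m := le_antisymm hk hm2
          subst hkm
          simpa [h0, hxcm] using hx1
        · simpa [h0, hm2] using (hR1 (xc k)).choose_spec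
    have hD : ∀ k, k < m → g (k+1) = g k := by
      intro k hk
      have hd1 : dist ((g (k+1)) : Fin n → ℝ) ((g k) : Fin n → ℝ) < 1 := by
        rw [← Subtype.dist_eq, dist_comm]
        exact chain_step_lt (hstep k) (hgmem k hk.le) (hgmem (k+1) hk) hlt
      exact Subtype.ext (lattice_eq_of_dist_lt_one (g (k+1)).2 (g k).2 hd1)
    have hconst : ∀ k, k ≤ m → g k = g 0 := by
      intro k
      induction k with
      | zero => intro _; rfl
      | succ k ih => intro hk; rw [hD k (by omega)]; exact ih (by omega)
    exact hy01 ((hg0 ▸ hgm ▸ hconst m le_rfl).symm)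
  by_contra hlt1
  push_neg at hlt1
  have hne : distortion R ≠ ⊤ := (hlt1.trans_le le_top).ne
  have hDreq : distortion R = ENNReal.ofReal (distortion R).toReal :=
    (ENNReal.ofReal_toReal hne).symm
  have hDr1 : (distortion R).toReal < 1 := by
    have := (ENNReal.toReal_lt_toReal hne (by simp : (1:ℝ≥0∞) ≠ ⊤)).2 hlt1
    simpa using this
  have hDr0 : 0 ≤ (distortion R).toReal := ENNReal.toReal_nonneg
  have hd0 : 0 ≤ dist x0 x1 := dist_nonneg
  obtain ⟨m, hmgt⟩ := exists_nat_gt (dist x0 x1 / (1 - (distortion R).toReal))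
  have hm0 : 0 < m := by
    by_contra h
    have hm00 : m = 0 := by omega
    subst hm00
    have : (0:ℝ) ≤ dist x0 x1 / (1 - (distortion R).toReal) :=
      div_nonneg hd0 (by linarith)
    simp at hmgt
    linarith
  have hmr : (0:ℝ) < m := by exact_mod_cast hm0
  have hdm : dist x0 x1 / m < 1 - (distortion R).toReal := by
    rw [div_lt_iff₀ (by linarith : (0:ℝ) < 1 - (distortion R).toReal)] at hmgt
    rw [div_lt_iff₀ hmr]
    nlinarith
  have hk := key m hm0
  rw [hDreq, ← ENNReal.ofReal_add hDr0 (div_nonneg hd0 hmr.le)] at hk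
  have := ENNReal.one_le_ofReal.mp hk
  linarith

/-- for `n ≥ 1`, both the Hausdorff distance and the
Gromov–Hausdorff distance between `ℝⁿ_∞` (with the sup-norm metric) and the
integer lattice `ℤⁿ_∞` (induced metric) equal `1/2`. -/
theorem hausdorff_eq_ghDist_intLattice (n : ℕ) (hn : 1 ≤ n) :
    EMetric.hausdorffEdist (latticeSet n) (Set.univ : Set (Fin n → ℝ)) = 1 / 2 ∧
    ghDist (Fin n → ℝ) (latticeSet n) = 1 / 2 := by
  refine ⟨haus_part n hn, le_antisymm ?_ ?_⟩
  · obtain ⟨R, hR, hdist⟩ := gh_upper n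
    calc ghDist (Fin n → ℝ) (latticeSet n)
        ≤ distortion R / 2 := ENNReal.div_le_div_right (iInf₂_le R hR) 2
      _ ≤ 1 / 2 := ENNReal.div_le_div_right hdist 2
  · exact ENNReal.div_le_div_right (le_iInf₂ fun R hR => gh_lower n hn R hR) 2

end
end

section
/- Let n ≥ 1, let ℝⁿ_∞ be ℝⁿ with the sup-norm metric, and let ℤⁿ_∞ be the integer lattice with the induced metric. For t ∈ [0, 1/2] let C_t = B_t(ℤⁿ_∞) be the closed t-neighborhood of ℤⁿ in ℝⁿ_∞ (with the induced metric). Then for all 0 ≤ t ≤ s ≤ 1/2 one has d_GH(C_t, C_s) = s − t; that is, the canonical Hausdorff geodesic connecting ℤⁿ_∞ and ℝⁿ_∞ is a shortest curve with respect to the Gromov–Hausdorff distance. -/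
open scoped ENNReal

noncomputable section

namespace GHAux

variable {X : Type*} [MetricSpace X]

def Chain (c : ℝ≥0∞) (x y : X) : Prop :=
  ∃ (m : ℕ) (f : Fin (m + 1) → X), f 0 = x ∧ f (Fin.last m) = y ∧
    ∀ i : Fin m, edist (f i.castSucc) (f i.succ) ≤ c

lemma ultraDist_le_of_chain {c : ℝ≥0∞} {x y : X} (h : Chain c x y) : ultraDist x y ≤ c := by
  obtain ⟨m, f, h0, hl, he⟩ := h
  refine iInf_le_of_le m ?_
  refine iInf_le_of_le f ?_
  refine iInf_le_of_le h0 ?_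
  refine iInf_le_of_le hl ?_
  exact iSup_le he

lemma Chain.mono {c c' : ℝ≥0∞} {x y : X} (h : Chain c x y) (hcc : c ≤ c') : Chain c' x y := by
  obtain ⟨m, f, h0, hl, he⟩ := h
  exact ⟨m, f, h0, hl, fun i => (he i).trans hcc⟩

lemma Chain.refl (c : ℝ≥0∞) (x : X) : Chain c x x :=
  ⟨0, fun _ => x, rfl, rfl, fun i => i.elim0⟩

lemma chain_of_edist_le {c : ℝ≥0∞} {x y : X} (h : edist x y ≤ c) : Chain c x y := by
  refine ⟨1, ![x, y], rfl, rfl, fun i => ?_⟩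
  fin_cases i
  simpa using h

lemma Chain.trans {c : ℝ≥0∞} {x y z : X} (h1 : Chain c x y) (h2 : Chain c y z) :
    Chain c x z := by
  obtain ⟨a, f, hf0, hfl, hfe⟩ := h1
  obtain ⟨b, g, hg0, hgl, hge⟩ := h2
  have hval : ∀ j : Fin (a + b + 1), (j : ℕ) - a < b + 1 := fun j => by
    have := j.isLt; omega
  set h : Fin (a + b + 1) → X :=
    fun j => if hj : (j : ℕ) < a + 1 then f ⟨j, hj⟩ else g ⟨(j : ℕ) - a, hval j⟩ with hh
  have hfg : f (Fin.last a) = g 0 := by rw [hfl, hg0]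
  have happ : ∀ (j : Fin (a + b + 1)) (hj : a ≤ (j : ℕ)), h j = g ⟨(j : ℕ) - a, hval j⟩ := by
    intro j hj
    by_cases hj' : (j : ℕ) < a + 1
    · have hja : (j : ℕ) = a := by omega
      have h1 : h j = f ⟨j, hj'⟩ := by simp only [hh, dif_pos hj']
      rw [h1]
      have : (⟨(j : ℕ), hj'⟩ : Fin (a + 1)) = Fin.last a := by ext; simp [Fin.last, hja]
      rw [this, hfg]
      congr 1
      ext; simp [hja]
    · simp only [hh, dif_neg hj']
  refine ⟨a + b, h, ?_, ?_, ?_⟩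
  · have : h 0 = f ⟨0, by omega⟩ := by
      simp only [hh, dif_pos (by simp <;> omega : ((0 : Fin (a + b + 1)) : ℕ) < a + 1)]
      exact congrArg f (Fin.ext (by simp))
    rw [this, ← hf0]
    exact congrArg f (Fin.ext (by simp))
  · rw [happ (Fin.last (a + b)) (by simp [Fin.last] <;> omega), ← hgl]
    exact congrArg g (Fin.ext (show a + b - a = b by omega))
  · intro i
    by_cases hi : (i : ℕ) + 1 < a + 1
    · have h1 : h i.castSucc = f ⟨(i : ℕ), by omega⟩ := by
        simp only [hh, dif_pos (show ((i.castSucc : Fin (a + b + 1)) : ℕ) < a + 1 by simp <;> omega)]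
        exact congrArg f (Fin.ext rfl)
      have h2 : h i.succ = f ⟨(i : ℕ) + 1, by omega⟩ := by
        simp only [hh, dif_pos (show ((i.succ : Fin (a + b + 1)) : ℕ) < a + 1 by simp <;> omega)]
        exact congrArg f (Fin.ext rfl)
      rw [h1, h2]
      have := hfe ⟨(i : ℕ), by omega⟩
      convert this using 4 <;> simp [Fin.ext_iff]
    · have hia : a ≤ (i : ℕ) := by omega
      rw [happ i.castSucc (by simp [hia]), happ i.succ (by simp <;> omega)]
      have := hge ⟨(i : ℕ) - a, by have := i.isLt; omega⟩
      convert this using 4 <;> simp [Fin.ext_iff] <;> omega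



variable {n : ℕ}

/-- Real version of an integer vector. -/
def toR (z : Fin n → ℤ) : Fin n → ℝ := fun i => (z i : ℝ)

lemma toR_mem (z : Fin n → ℤ) : toR z ∈ latticeSet n := ⟨z, rfl⟩

/-- Coordinatewise rounding. -/
def rnd (p : Fin n → ℝ) : Fin n → ℝ := toR fun i => round (p i)

lemma rnd_mem (p : Fin n → ℝ) : rnd p ∈ latticeSet n := toR_mem _

lemma dist_rnd_le (p : Fin n → ℝ) {z : Fin n → ℝ} (hz : z ∈ latticeSet n) :
    dist p (rnd p) ≤ dist p z := by
  obtain ⟨w, rfl⟩ := hz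
  show dist p (rnd p) ≤ dist p (fun i => ((w i : ℝ)))
  refine (dist_pi_le_iff dist_nonneg).2 fun i => ?_
  calc dist (p i) (rnd p i) = |p i - (round (p i) : ℝ)| := by
        simp [rnd, toR, Real.dist_eq]
    _ ≤ |p i - (w i : ℝ)| := round_le _ _
    _ = dist (p i) ((w i : ℝ)) := (Real.dist_eq _ _).symm
    _ ≤ dist p (fun j => ((w j : ℝ))) := by
        simpa using dist_le_pi_dist p (fun j => ((w j : ℝ))) i

lemma mem_cth_of_dist_le {δ : ℝ} {p z : Fin n → ℝ} (hz : z ∈ latticeSet n)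
    (h : dist p z ≤ δ) : p ∈ Metric.cthickening δ (latticeSet n) := by
  have hδ : 0 ≤ δ := le_trans dist_nonneg h
  rw [Metric.mem_cthickening_iff]
  exact (EMetric.infEdist_le_edist_of_mem hz).trans ((edist_le_ofReal hδ).2 h)

lemma mem_cth_iff {δ : ℝ} (hδ : 0 ≤ δ) {p : Fin n → ℝ} :
    p ∈ Metric.cthickening δ (latticeSet n) ↔ dist p (rnd p) ≤ δ := by
  constructor
  · intro h
    rw [Metric.mem_cthickening_iff] at h
    rw [← edist_le_ofReal hδ]
    refine le_trans ?_ h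
    refine EMetric.le_infEdist.2 fun z hz => ?_
    rw [edist_dist, edist_dist]
    exact ENNReal.ofReal_le_ofReal (dist_rnd_le p hz)
  · exact mem_cth_of_dist_le (rnd_mem p)


section Chains

variable {n : ℕ} {s : ℝ}

local notation "C" => fun (s : ℝ) => Metric.cthickening s (latticeSet n)

lemma segment_chain {ε : ℝ} (hε : 0 < ε) {w : Fin n → ℝ} (hw : w ∈ latticeSet n)
    (P Q : ↥(Metric.cthickening s (latticeSet n)))
    (hp : dist (P : Fin n → ℝ) w ≤ s) (hq : dist (Q : Fin n → ℝ) w ≤ s) :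
    Chain (ENNReal.ofReal ε) P Q := by
  set p : Fin n → ℝ := (P : Fin n → ℝ) with hp'
  set q : Fin n → ℝ := (Q : Fin n → ℝ) with hq'
  have hs0 : 0 ≤ s := le_trans dist_nonneg hp
  obtain ⟨N, hN⟩ := exists_nat_gt (dist p q / ε)
  have hN0 : 0 < (N : ℝ) := lt_of_le_of_lt (div_nonneg dist_nonneg hε.le) hN
  have hNn : 0 < N := by exact_mod_cast hN0
  -- membership of segment points
  have hmem : ∀ u : ℝ, 0 ≤ u → u ≤ 1 → p + u • (q - p) ∈ Metric.cthickening s (latticeSet n) := by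
    intro u hu0 hu1
    refine mem_cth_of_dist_le hw ?_
    have heq : p + u • (q - p) - w = (1 - u) • (p - w) + u • (q - w) := by
      module
    rw [dist_eq_norm, heq]
    calc ‖(1 - u) • (p - w) + u • (q - w)‖
        ≤ ‖(1 - u) • (p - w)‖ + ‖u • (q - w)‖ := norm_add_le _ _
      _ = |1 - u| * ‖p - w‖ + |u| * ‖q - w‖ := by
          rw [norm_smul, norm_smul, Real.norm_eq_abs, Real.norm_eq_abs]
      _ = (1 - u) * dist p w + u * dist q w := by
          rw [abs_of_nonneg (by linarith), abs_of_nonneg hu0, dist_eq_norm, dist_eq_norm]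
      _ ≤ (1 - u) * s + u * s := by
          have h1 : (0:ℝ) ≤ 1 - u := by linarith
          exact add_le_add (mul_le_mul_of_nonneg_left hp h1) (mul_le_mul_of_nonneg_left hq hu0)
      _ = s := by ring
  have hfrac : ∀ k : Fin (N + 1), 0 ≤ ((k : ℕ) : ℝ) / N ∧ ((k : ℕ) : ℝ) / N ≤ 1 := by
    intro k
    constructor
    · positivity
    · rw [div_le_one hN0]
      exact_mod_cast Nat.le_of_lt_succ k.isLt
  refine ⟨N, fun k => ⟨p + (((k : ℕ) : ℝ) / N) • (q - p),
    hmem _ (hfrac k).1 (hfrac k).2⟩, ?_, ?_, ?_⟩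
  · ext j
    simp [hp']
  · ext j
    have : ((Fin.last N : Fin (N+1)) : ℕ) = N := rfl
    simp only [this, Subtype.coe_mk]
    rw [div_self hN0.ne']
    simp [hq']
  · intro k
    rw [Subtype.edist_eq, edist_le_ofReal hε.le]
    have hdiff : (p + ((((k.succ : Fin (N+1)) : ℕ) : ℝ) / N) • (q - p)) -
        (p + ((((k.castSucc : Fin (N+1)) : ℕ) : ℝ) / N) • (q - p)) = ((1 : ℝ) / N) • (q - p) := by
      have h1 : (((k.succ : Fin (N+1)) : ℕ) : ℝ) = ((k : ℕ) : ℝ) + 1 := by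
        simp
      have h2 : (((k.castSucc : Fin (N+1)) : ℕ) : ℝ) = ((k : ℕ) : ℝ) := by simp
      have h3 : (((k:ℕ):ℝ) + 1) / N - ((k:ℕ):ℝ) / N = (1:ℝ)/N := by field_simp; ring
      rw [h1, h2, add_sub_add_left_eq_sub, ← sub_smul, h3]
    rw [dist_eq_norm]
    show ‖(p + ((((k.castSucc : Fin (N+1)) : ℕ) : ℝ) / N) • (q - p)) -
        (p + ((((k.succ : Fin (N+1)) : ℕ) : ℝ) / N) • (q - p))‖ ≤ ε
    rw [← norm_neg, neg_sub, hdiff, norm_smul, Real.norm_eq_abs, abs_of_nonneg (by positivity)]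
    have hqp : ‖q - p‖ = dist q p := (dist_eq_norm q p).symm
    have hlt : dist p q < N * ε := by rw [div_lt_iff₀ hε] at hN; nlinarith [hN]
    rw [hqp, dist_comm q p, div_mul_eq_mul_div, one_mul, div_le_iff₀ hN0]
    nlinarith [hlt]


lemma toR_update (z : Fin n → ℤ) (i : Fin n) (σ : ℤ) :
    toR (Function.update z i (z i + σ)) = toR z + Pi.single i (σ : ℝ) := by
  funext j
  by_cases h : j = i
  · subst h; simp [toR, Function.update]
  · simp [toR, Function.update, h, Pi.single_apply]

lemma norm_single_le (i : Fin n) (c : ℝ) : ‖(Pi.single i c : Fin n → ℝ)‖ ≤ |c| := by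
  refine (pi_norm_le_iff_of_nonneg (abs_nonneg c)).2 fun j => ?_
  by_cases h : j = i
  · subst h; simp
  · simp [Pi.single_apply, h, abs_nonneg]

lemma step_chain {ε : ℝ} (hs0 : 0 ≤ s) (hs : s ≤ 1/2) (hε : 0 < ε)
    (z : Fin n → ℤ) (i : Fin n) (σ : ℤ) (hσ : |σ| = 1) :
    Chain (ENNReal.ofReal (1 - 2*s) ⊔ ENNReal.ofReal ε)
      (⟨toR z, Metric.self_subset_cthickening _ (toR_mem z)⟩ :
        ↥(Metric.cthickening s (latticeSet n)))
      ⟨toR (Function.update z i (z i + σ)), Metric.self_subset_cthickening _ (toR_mem _)⟩ := by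
  set e : Fin n → ℝ := Pi.single i ((σ : ℤ) : ℝ) with he'
  have he : ‖e‖ ≤ 1 := by
    refine (norm_single_le i _).trans ?_
    rw [← Int.cast_abs, hσ]; norm_num
  have h2s : 0 ≤ 1 - 2 * s := by linarith
  set z' := Function.update z i (z i + σ) with hz'
  have hzz' : toR z' = toR z + e := toR_update z i σ
  set a : Fin n → ℝ := toR z + s • e with ha'
  set b : Fin n → ℝ := toR z + (1 - s) • e with hb'
  have hda : dist a (toR z) ≤ s := by
    rw [dist_eq_norm]
    have : a - toR z = s • e := by rw [ha']; abel
    rw [this, norm_smul, Real.norm_eq_abs, abs_of_nonneg hs0]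
    nlinarith [norm_nonneg e]
  have hdb : dist b (toR z') ≤ s := by
    rw [dist_eq_norm, hzz']
    have : b - (toR z + e) = (-s) • e := by rw [hb']; module
    rw [this, norm_smul, Real.norm_eq_abs, abs_neg, abs_of_nonneg hs0]
    nlinarith [norm_nonneg e]
  have hma : a ∈ Metric.cthickening s (latticeSet n) := mem_cth_of_dist_le (toR_mem z) hda
  have hmb : b ∈ Metric.cthickening s (latticeSet n) := mem_cth_of_dist_le (toR_mem z') hdb
  have hdab : dist a b ≤ 1 - 2 * s := by
    rw [dist_eq_norm]
    have : a - b = (2 * s - 1) • e := by rw [ha', hb']; module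
    rw [this, norm_smul, Real.norm_eq_abs, abs_of_nonpos (by linarith)]
    nlinarith [norm_nonneg e]
  refine Chain.trans (y := ⟨a, hma⟩) ?_ (Chain.trans (y := ⟨b, hmb⟩) ?_ ?_)
  · exact (segment_chain hε (toR_mem z)
      ⟨toR z, Metric.self_subset_cthickening _ (toR_mem z)⟩ ⟨a, hma⟩
      (by simpa using hs0) hda).mono le_sup_right
  · refine (chain_of_edist_le (x := (⟨a, hma⟩ : ↥(Metric.cthickening s (latticeSet n))))
      (y := ⟨b, hmb⟩) ?_).mono le_sup_left
    rw [Subtype.edist_eq, edist_le_ofReal h2s]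
    exact hdab
  · exact (segment_chain hε (toR_mem z') ⟨b, hmb⟩
      ⟨toR z', Metric.self_subset_cthickening _ (toR_mem z')⟩
      hdb (by simpa using hs0)).mono le_sup_right

lemma lattice_chain {ε : ℝ} (hs0 : 0 ≤ s) (hs : s ≤ 1/2) (hε : 0 < ε)
    (z w : Fin n → ℤ) :
    Chain (ENNReal.ofReal (1 - 2*s) ⊔ ENNReal.ofReal ε)
      (⟨toR z, Metric.self_subset_cthickening _ (toR_mem z)⟩ :
        ↥(Metric.cthickening s (latticeSet n)))
      ⟨toR w, Metric.self_subset_cthickening _ (toR_mem w)⟩ := by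
  suffices h : ∀ (k : ℕ) (z : Fin n → ℤ), (∑ j, (z j - w j).natAbs) = k →
      Chain (ENNReal.ofReal (1 - 2*s) ⊔ ENNReal.ofReal ε)
        (⟨toR z, Metric.self_subset_cthickening _ (toR_mem z)⟩ :
          ↥(Metric.cthickening s (latticeSet n)))
        ⟨toR w, Metric.self_subset_cthickening _ (toR_mem w)⟩ by
    exact h _ z rfl
  intro k
  induction k using Nat.strong_induction_on with
  | _ k ih =>
    intro z hk
    by_cases hzw : z = w
    · subst hzw; exact Chain.refl _ _
    · have hex : ∃ i, z i ≠ w i := by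
        by_contra h; push_neg at h; exact hzw (funext h)
      obtain ⟨i, hi⟩ := hex
      set σ : ℤ := if z i < w i then 1 else -1 with hσdef
      have hσ : |σ| = 1 := by
        rcases lt_or_ge (z i) (w i) with h | h
        · rw [hσdef, if_pos h]; rfl
        · rw [hσdef, if_neg (not_lt.2 h)]; rfl
      set z' := Function.update z i (z i + σ) with hz'def
      have habs : (z i + σ - w i).natAbs + 1 = (z i - w i).natAbs := by
        rcases lt_or_ge (z i) (w i) with h | h
        · rw [hσdef]; simp only [if_pos h]; omega
        · have h' : w i < z i := lt_of_le_of_ne h (Ne.symm hi)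
          rw [hσdef]; simp only [if_neg (not_lt.2 h)]; omega
      have hsum' : (∑ j, (z' j - w j).natAbs) + 1 = k := by
        have e1 : ∑ j, (z' j - w j).natAbs
            = (z' i - w i).natAbs + ∑ j ∈ Finset.univ.erase i, (z' j - w j).natAbs :=
          (Finset.add_sum_erase _ _ (Finset.mem_univ i)).symm
        have e2 : ∑ j, (z j - w j).natAbs
            = (z i - w i).natAbs + ∑ j ∈ Finset.univ.erase i, (z j - w j).natAbs :=
          (Finset.add_sum_erase _ _ (Finset.mem_univ i)).symm
        have e3 : ∑ j ∈ Finset.univ.erase i, (z' j - w j).natAbs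
            = ∑ j ∈ Finset.univ.erase i, (z j - w j).natAbs := by
          refine Finset.sum_congr rfl fun j hj => ?_
          have hji : j ≠ i := Finset.ne_of_mem_erase hj
          simp [hz'def, Function.update, hji]
        have e4 : z' i = z i + σ := by simp [hz'def]
        rw [e1, e3, e4, ← hk, e2]
        omega
      have hstep := step_chain hs0 hs hε z i σ hσ
      have hrec := ih (∑ j, (z' j - w j).natAbs) (by omega) z' rfl
      exact hstep.trans hrec

lemma chain_in_cth {ε : ℝ} (hs0 : 0 ≤ s) (hs : s ≤ 1/2) (hε : 0 < ε)
    (P Q : ↥(Metric.cthickening s (latticeSet n))) :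
    Chain (ENNReal.ofReal (1 - 2*s) ⊔ ENNReal.ofReal ε) P Q := by
  have hP : dist (P : Fin n → ℝ) (rnd (P : Fin n → ℝ)) ≤ s := (mem_cth_iff hs0).1 P.2
  have hQ : dist (Q : Fin n → ℝ) (rnd (Q : Fin n → ℝ)) ≤ s := (mem_cth_iff hs0).1 Q.2
  refine Chain.trans
      (y := ⟨rnd (P : Fin n → ℝ), Metric.self_subset_cthickening _ (rnd_mem _)⟩) ?_
      (Chain.trans
        (y := ⟨rnd (Q : Fin n → ℝ), Metric.self_subset_cthickening _ (rnd_mem _)⟩) ?_ ?_)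
  · exact (segment_chain hε (rnd_mem (P : Fin n → ℝ)) P
      ⟨rnd (P : Fin n → ℝ), Metric.self_subset_cthickening _ (rnd_mem _)⟩
      hP (by simpa using hs0)).mono le_sup_right
  · exact lattice_chain hs0 hs hε (fun i => round ((P : Fin n → ℝ) i))
      (fun i => round ((Q : Fin n → ℝ) i))
  · exact (segment_chain hε (rnd_mem (Q : Fin n → ℝ))
      ⟨rnd (Q : Fin n → ℝ), Metric.self_subset_cthickening _ (rnd_mem _)⟩ Q
      (by simpa using hs0) hQ).mono le_sup_right

end Chains


section Diam

variable {n : ℕ} {s t : ℝ}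

lemma ultraDiam_cth_le (hs0 : 0 ≤ s) (hs : s ≤ 1/2) :
    ultraDiam ↥(Metric.cthickening s (latticeSet n)) ≤ ENNReal.ofReal (1 - 2*s) := by
  refine iSup₂_le fun P Q => ?_
  refine ENNReal.le_of_forall_pos_le_add fun ε hε _ => ?_
  have hch := chain_in_cth (n := n) hs0 hs (by exact_mod_cast hε : (0:ℝ) < (ε : ℝ)) P Q
  refine (ultraDist_le_of_chain hch).trans ?_
  refine sup_le le_self_add ?_
  rw [ENNReal.ofReal_coe_nnreal]
  exact le_add_self

lemma ultraDist_lower (h0 : 0 ≤ t) (i0 : Fin n) :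
    ENNReal.ofReal (1 - 2*t) ≤
      ultraDist
        (⟨toR 0, Metric.self_subset_cthickening _ (toR_mem 0)⟩ :
          ↥(Metric.cthickening t (latticeSet n)))
        ⟨toR (Pi.single i0 1), Metric.self_subset_cthickening _ (toR_mem _)⟩ := by
  rcases le_or_gt (1 - 2*t) 0 with h | h
  · rw [ENNReal.ofReal_eq_zero.2 h]; exact zero_le
  refine le_iInf fun m => le_iInf fun f => le_iInf fun hf0 => le_iInf fun hfl => ?_
  set F : Fin (m+1) → ℤ := fun j => round (((f j : Fin n → ℝ)) i0) with hF
  have hF0 : F 0 = 0 := by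
    rw [hF]; simp only [hf0]
    show round ((toR (0 : Fin n → ℤ)) i0) = 0
    simp [toR]
  have hFl : F (Fin.last m) = 1 := by
    rw [hF]; simp only [hfl]
    show round ((toR (Pi.single i0 1)) i0) = 1
    simp [toR]
  have hex : ∃ i : Fin m, F i.castSucc ≠ F i.succ := by
    by_contra hc
    push_neg at hc
    have hconst : ∀ j : Fin (m+1), F j = F 0 := by
      intro j
      induction j using Fin.induction with
      | zero => rfl
      | succ i ihi => rw [← hc i]; exact ihi
    rw [hconst (Fin.last m), hF0] at hFl
    exact one_ne_zero hFl.symm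
  obtain ⟨i, hi⟩ := hex
  refine le_iSup_of_le i ?_
  set p : Fin n → ℝ := (f i.castSucc : Fin n → ℝ) with hp'
  set q : Fin n → ℝ := (f i.succ : Fin n → ℝ) with hq'
  have hround : ∀ j : Fin (m+1), |((f j : Fin n → ℝ)) i0 - (F j : ℝ)| ≤ t := by
    intro j
    have hmem := (mem_cth_iff h0).1 (f j).2
    have hcomp : dist (((f j : Fin n → ℝ)) i0) ((rnd (f j : Fin n → ℝ)) i0)
        ≤ dist ((f j : Fin n → ℝ)) (rnd (f j : Fin n → ℝ)) := dist_le_pi_dist _ _ i0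
    have : (rnd ((f j : Fin n → ℝ))) i0 = ((F j : ℤ) : ℝ) := by
      simp [rnd, toR, hF]
    rw [this, Real.dist_eq] at hcomp
    exact hcomp.trans hmem
  have h1 : (1 : ℝ) ≤ |(F i.castSucc : ℝ) - (F i.succ : ℝ)| := by
    have : (1 : ℤ) ≤ |F i.castSucc - F i.succ| := Int.one_le_abs (sub_ne_zero.2 hi)
    calc (1:ℝ) = ((1:ℤ) : ℝ) := by norm_num
      _ ≤ ((|F i.castSucc - F i.succ| : ℤ) : ℝ) := by exact_mod_cast this
      _ = |(F i.castSucc : ℝ) - (F i.succ : ℝ)| := by push_cast [Int.cast_abs]; ring_nf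
  have hpq : 1 - 2*t ≤ |p i0 - q i0| := by
    have ha := hround i.castSucc
    have hb := hround i.succ
    have htri : |(F i.castSucc : ℝ) - (F i.succ : ℝ)| ≤
        |(F i.castSucc : ℝ) - p i0| + |p i0 - q i0| + |q i0 - (F i.succ : ℝ)| :=
      calc |(F i.castSucc : ℝ) - (F i.succ : ℝ)|
          ≤ |(F i.castSucc : ℝ) - q i0| + |q i0 - (F i.succ : ℝ)| := abs_sub_le _ _ _
        _ ≤ (|(F i.castSucc : ℝ) - p i0| + |p i0 - q i0|) + |q i0 - (F i.succ : ℝ)| :=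
            add_le_add_left (abs_sub_le _ _ _) _
    have ha' : |(F i.castSucc : ℝ) - p i0| ≤ t := by rwa [abs_sub_comm] at ha
    have hb' : |q i0 - (F i.succ : ℝ)| ≤ t := hb
    linarith
  have hdist : 1 - 2*t ≤ dist p q := by
    refine hpq.trans ?_
    rw [← Real.dist_eq]
    exact dist_le_pi_dist p q i0
  rw [Subtype.edist_eq, edist_dist]
  exact ENNReal.ofReal_le_ofReal hdist

lemma ultraDiam_cth_ge (h0 : 0 ≤ t) (hn : 1 ≤ n) :
    ENNReal.ofReal (1 - 2*t) ≤ ultraDiam ↥(Metric.cthickening t (latticeSet n)) := by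
  refine (ultraDist_lower h0 (⟨0, hn⟩ : Fin n)).trans ?_
  show _ ≤ ⨆ (x : ↥(Metric.cthickening t (latticeSet n))) (y : ↥(Metric.cthickening t (latticeSet n))), ultraDist x y
  exact le_iSup_of_le (⟨toR 0, Metric.self_subset_cthickening _ (toR_mem 0)⟩ :
      ↥(Metric.cthickening t (latticeSet n))) (le_iSup _ _)

end Diam

section Corr

variable {X Y : Type*} [MetricSpace X] [MetricSpace Y] {R : Set (X × Y)}

lemma distortion_pair_le {x x' : X} {y y' : Y} (h : (x, y) ∈ R) (h' : (x', y') ∈ R) :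
    ENNReal.ofReal |dist x x' - dist y y'| ≤ distortion R :=
  le_iSup₂_of_le (x, y) h (le_iSup₂_of_le (x', y') h' le_rfl)

lemma edist_le_corr {x x' : X} {y y' : Y} (h : (x, y) ∈ R) (h' : (x', y') ∈ R) :
    edist x x' ≤ edist y y' + distortion R := by
  rw [edist_dist, edist_dist]
  calc ENNReal.ofReal (dist x x')
      ≤ ENNReal.ofReal (dist y y' + |dist x x' - dist y y'|) := by
        apply ENNReal.ofReal_le_ofReal
        have := le_abs_self (dist x x' - dist y y')
        linarith
    _ ≤ ENNReal.ofReal (dist y y') + ENNReal.ofReal |dist x x' - dist y y'| :=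
        ENNReal.ofReal_add_le
    _ ≤ _ := add_le_add_right (distortion_pair_le h h') _

lemma ultraDiam_le_corr (hR : IsCorrespondence R) :
    ultraDiam X ≤ ultraDiam Y + distortion R := by
  refine iSup₂_le fun x x' => ?_
  obtain ⟨y, hy⟩ := hR.1 x
  obtain ⟨y', hy'⟩ := hR.1 x'
  have hle : ultraDist y y' ≤ ultraDiam Y := by
    show ultraDist y y' ≤ ⨆ (a : Y) (b : Y), ultraDist a b
    exact le_iSup_of_le y (le_iSup _ y')
  refine le_trans ?_ (add_le_add_left hle _)
  show ultraDist x x' ≤ (⨅ (m : ℕ) (g : Fin (m + 1) → Y) (_ : g 0 = y)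
      (_ : g (Fin.last m) = y'), ⨆ i : Fin m, edist (g i.castSucc) (g i.succ)) + distortion R
  rw [ENNReal.iInf_add]
  refine le_iInf fun m => ?_
  rw [ENNReal.iInf_add]
  refine le_iInf fun g => ?_
  rw [ENNReal.iInf_add]
  refine le_iInf fun hg0 => ?_
  rw [ENNReal.iInf_add]
  refine le_iInf fun hgl => ?_
  rcases Nat.eq_zero_or_pos m with hm | hm
  · subst hm
    have hyy : y = y' := by
      rw [← hg0, ← hgl]
      exact congrArg g (Fin.ext rfl)
    have h2 : edist x x' ≤ distortion R := by
      rw [edist_dist]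
      have : dist y y' = 0 := by rw [hyy, dist_self]
      have heq : |dist x x' - dist y y'| = dist x x' := by
        rw [this, sub_zero, abs_of_nonneg dist_nonneg]
      calc ENNReal.ofReal (dist x x') = ENNReal.ofReal |dist x x' - dist y y'| := by rw [heq]
        _ ≤ _ := distortion_pair_le hy hy'
    calc ultraDist x x' ≤ edist x x' := ultraDist_le_of_chain (chain_of_edist_le le_rfl)
      _ ≤ distortion R := h2
      _ ≤ _ := le_add_self
  · classical
    set S : ℝ≥0∞ := ⨆ i : Fin m, edist (g i.castSucc) (g i.succ) with hS
    set fX : Fin (m+1) → X := fun j =>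
      if j = 0 then x else if j = Fin.last m then x' else (hR.2 (g j)).choose with hfX
    have hlast0 : (Fin.last m) ≠ (0 : Fin (m+1)) := by
      intro hcon
      have := congrArg Fin.val hcon
      simp [Fin.last] at this
      omega
    have hmem : ∀ j, (fX j, g j) ∈ R := by
      intro j
      by_cases hj0 : j = 0
      · subst hj0
        simp only [hfX, if_pos rfl]
        rw [hg0]; exact hy
      · by_cases hjl : j = Fin.last m
        · subst hjl
          simp only [hfX, if_neg hlast0, if_pos rfl]
          rw [hgl]; exact hy'
        · simp only [hfX, if_neg hj0, if_neg hjl]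
          exact (hR.2 (g j)).choose_spec
    refine ultraDist_le_of_chain (c := S + distortion R) ⟨m, fX, ?_, ?_, fun i => ?_⟩
    · simp only [hfX, if_pos rfl]
    · simp [hfX, if_neg hlast0]
    · calc edist (fX i.castSucc) (fX i.succ)
          ≤ edist (g i.castSucc) (g i.succ) + distortion R :=
            edist_le_corr (hmem i.castSucc) (hmem i.succ)
        _ ≤ S + distortion R := by
            gcongr
            exact le_iSup (fun i : Fin m => edist (g i.castSucc) (g i.succ)) i

end Corr

end GHAux

/-- for `n ≥ 1` and `0 ≤ t ≤ s ≤ 1/2`, the closed neighborhoods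
`C_t = B_t(ℤⁿ_∞)` in `ℝⁿ_∞` (induced metrics) satisfy `d_GH(C_t, C_s) = s − t`;
i.e. the canonical Hausdorff geodesic joining `ℤⁿ_∞` and `ℝⁿ_∞` is a shortest
curve for the Gromov–Hausdorff distance. -/
theorem canonical_geodesic_lattice_GH (n : ℕ) (hn : 1 ≤ n)
    (t s : ℝ) (h0 : 0 ≤ t) (hts : t ≤ s) (hs : s ≤ 1 / 2) :
    ghDist (Metric.cthickening t (latticeSet n)) (Metric.cthickening s (latticeSet n)) =
      ENNReal.ofReal (s - t) := by
  classical
  have hs0 : 0 ≤ s := h0.trans hts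
  have hst : 0 ≤ s - t := by linarith
  have hhalf : ENNReal.ofReal (2*(s-t)) / 2 = ENNReal.ofReal (s - t) := by
    rw [ENNReal.ofReal_mul (by norm_num : (0:ℝ) ≤ 2), ENNReal.ofReal_ofNat 2,
      mul_comm, mul_div_assoc, ENNReal.div_self (by norm_num) (by norm_num), mul_one]
  refine le_antisymm ?_ ?_
  · -- upper bound
    set R : Set (↥(Metric.cthickening t (latticeSet n)) × ↥(Metric.cthickening s (latticeSet n))) :=
      {pq | dist (pq.1 : Fin n → ℝ) (pq.2 : Fin n → ℝ) ≤ s - t} with hR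
    have hcorr : IsCorrespondence R := by
      constructor
      · intro x
        refine ⟨⟨(x : Fin n → ℝ), Metric.cthickening_mono hts _ x.2⟩, ?_⟩
        show dist (x : Fin n → ℝ) (x : Fin n → ℝ) ≤ s - t
        simpa using hst
      · intro y
        rcases eq_or_lt_of_le hs0 with hs' | hs'
        · -- s = 0, hence t = 0
          have ht0 : t = 0 := le_antisymm (hts.trans hs'.symm.le) h0
          refine ⟨⟨(y : Fin n → ℝ), by rw [ht0, hs']; exact y.2⟩, ?_⟩
          show dist (y : Fin n → ℝ) (y : Fin n → ℝ) ≤ s - t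
          simpa using hst
        · set z := GHAux.rnd (y : Fin n → ℝ) with hz
          have hyz : dist (y : Fin n → ℝ) z ≤ s := (GHAux.mem_cth_iff hs0).1 y.2
          set x : Fin n → ℝ := z + (t/s) • ((y : Fin n → ℝ) - z) with hx'
          have hts' : 0 ≤ t / s := div_nonneg h0 hs0
          have hts1 : t / s ≤ 1 := by
            rw [div_le_one hs']
            exact hts
          have hxz : dist x z ≤ t := by
            rw [dist_eq_norm]
            have hd : x - z = (t/s) • ((y : Fin n → ℝ) - z) := by rw [hx']; abel
            rw [hd, norm_smul, Real.norm_eq_abs, abs_of_nonneg hts']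
            have hnz : ‖(y : Fin n → ℝ) - z‖ ≤ s := by rwa [← dist_eq_norm]
            calc t / s * ‖(y : Fin n → ℝ) - z‖ ≤ t / s * s :=
                  mul_le_mul_of_nonneg_left hnz hts'
              _ = t := by field_simp
          have hx : x ∈ Metric.cthickening t (latticeSet n) :=
            GHAux.mem_cth_of_dist_le (GHAux.rnd_mem _) hxz
          refine ⟨⟨x, hx⟩, ?_⟩
          show dist x (y : Fin n → ℝ) ≤ s - t
          rw [dist_eq_norm]
          have hd : x - (y : Fin n → ℝ) = (t/s - 1) • ((y : Fin n → ℝ) - z) := by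
            rw [hx']; module
          rw [hd, norm_smul, Real.norm_eq_abs, abs_of_nonpos (by linarith)]
          have hnz : ‖(y : Fin n → ℝ) - z‖ ≤ s := by rwa [← dist_eq_norm]
          calc -(t/s - 1) * ‖(y : Fin n → ℝ) - z‖ ≤ -(t/s - 1) * s := by
                apply mul_le_mul_of_nonneg_left hnz
                linarith
            _ = s - t := by field_simp; ring
    have hdist : distortion R ≤ ENNReal.ofReal (2*(s-t)) := by
      refine iSup₂_le fun p hp => iSup₂_le fun q hq => ?_
      apply ENNReal.ofReal_le_ofReal
      have h1 : dist (p.1 : Fin n → ℝ) (p.2 : Fin n → ℝ) ≤ s - t := hp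
      have h2 : dist (q.1 : Fin n → ℝ) (q.2 : Fin n → ℝ) ≤ s - t := hq
      rw [Subtype.dist_eq p.1 q.1, Subtype.dist_eq p.2 q.2]
      rw [abs_sub_le_iff]
      have t1 := dist_triangle4 (p.1 : Fin n → ℝ) (p.2 : Fin n → ℝ) (q.2 : Fin n → ℝ)
        (q.1 : Fin n → ℝ)
      have t2 := dist_triangle4 (p.2 : Fin n → ℝ) (p.1 : Fin n → ℝ) (q.1 : Fin n → ℝ)
        (q.2 : Fin n → ℝ)
      have c1 : dist (q.2 : Fin n → ℝ) (q.1 : Fin n → ℝ) = dist (q.1 : Fin n → ℝ) (q.2 : Fin n → ℝ) :=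
        dist_comm _ _
      have c2 : dist (p.2 : Fin n → ℝ) (p.1 : Fin n → ℝ) = dist (p.1 : Fin n → ℝ) (p.2 : Fin n → ℝ) :=
        dist_comm _ _
      constructor <;> linarith
    calc ghDist (↥(Metric.cthickening t (latticeSet n))) (↥(Metric.cthickening s (latticeSet n)))
        ≤ distortion R / 2 :=
          ENNReal.div_le_div_right (iInf₂_le R hcorr) 2
      _ ≤ ENNReal.ofReal (2*(s-t)) / 2 := ENNReal.div_le_div_right hdist 2
      _ = ENNReal.ofReal (s - t) := hhalf
  · -- lower bound
    have hkey : ∀ (R : Set (↥(Metric.cthickening t (latticeSet n)) ×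
        ↥(Metric.cthickening s (latticeSet n)))), IsCorrespondence R →
        ENNReal.ofReal (2*(s-t)) ≤ distortion R := by
      intro R hR
      have h1 := GHAux.ultraDiam_le_corr hR
      have h2 := GHAux.ultraDiam_cth_ge (n := n) (t := t) h0 hn
      have h3 := GHAux.ultraDiam_cth_le (n := n) (s := s) hs0 hs
      have h4 : ENNReal.ofReal (1 - 2*t) ≤ ENNReal.ofReal (1 - 2*s) + distortion R :=
        h2.trans (h1.trans (add_le_add_left h3 _))
      have h5 : ENNReal.ofReal (2*(s-t)) + ENNReal.ofReal (1 - 2*s) = ENNReal.ofReal (1 - 2*t) := by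
        rw [← ENNReal.ofReal_add (by linarith) (by linarith)]
        ring_nf
      rw [← ENNReal.add_le_add_iff_right (ENNReal.ofReal_ne_top (r := 1 - 2*s)), h5]
      rwa [add_comm (ENNReal.ofReal (1 - 2*s))] at h4
    have hinf : ENNReal.ofReal (2*(s-t)) ≤
        ⨅ (R : Set (↥(Metric.cthickening t (latticeSet n)) ×
          ↥(Metric.cthickening s (latticeSet n)))) (_ : IsCorrespondence R),
          distortion R :=
      le_iInf fun R => le_iInf fun hR => hkey R hR
    calc ENNReal.ofReal (s - t) = ENNReal.ofReal (2*(s-t)) / 2 := hhalf.symm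
      _ ≤ _ := ENNReal.div_le_div_right hinf 2


end
end
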